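/- Every 3-fold covering of the plane by a finite set of closed half-planes can be decomposed into two coverings: if every point of ℝ² belongs to at least 3 half-planes of a finite family H, then H can be partitioned into two subfamilies each of which covers ℝ². -/

import Mathlib

open Set

namespace HalfPlaneCover

abbrev E := ℝ × ℝ

def dp (u v : E) : ℝ := u.1 * v.1 + u.2 * v.2

lemma dp_comm (u v : E) : dp u v = dp v u := by simp only [dp]; ring

lemma dp_sub_right (n u v : E) : dp n (u - v) = dp n u - dp n v := by
  simp only [dp, Prod.fst_sub, Prod.snd_sub]; ring

lemma dp_add_right (n u v : E) : dp n (u + v) = dp n u + dp n v := by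
  simp only [dp, Prod.fst_add, Prod.snd_add]; ring

lemma dp_smul_left (c : ℝ) (u v : E) : dp (c • u) v = c * dp u v := by
  simp only [dp, Prod.smul_fst, Prod.smul_snd, smul_eq_mul]; ring

lemma dp_smul_right (c : ℝ) (u v : E) : dp u (c • v) = c * dp u v := by
  simp only [dp, Prod.smul_fst, Prod.smul_snd, smul_eq_mul]; ring

lemma dp_add_left (u v w : E) : dp (u + v) w = dp u w + dp v w := by
  simp only [dp, Prod.fst_add, Prod.snd_add]; ring

lemma dp_zero_left (v : E) : dp 0 v = 0 := by simp [dp]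

lemma dp_zero_right (v : E) : dp v 0 = 0 := by simp [dp]

lemma dp_self_pos {u : E} (h : u ≠ 0) : 0 < dp u u := by
  have h' : u.1 ≠ 0 ∨ u.2 ≠ 0 := by
    by_contra hc
    push_neg at hc
    exact h (Prod.ext hc.1 hc.2)
  have h1 : 0 ≤ u.1 * u.1 := mul_self_nonneg _
  have h2 : 0 ≤ u.2 * u.2 := mul_self_nonneg _
  rcases h' with hx | hx
  · have : 0 < u.1 * u.1 := by positivity
    simp only [dp]; nlinarith
  · have : 0 < u.2 * u.2 := by positivity
    simp only [dp]; nlinarith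

lemma continuous_dp (n : E) : Continuous fun y : E => dp n y := by
  simp only [dp]
  fun_prop

lemma dep3 (a b c : E) : ∃ p q r : ℝ, ¬(p = 0 ∧ q = 0 ∧ r = 0) ∧
    p • a + q • b + r • c = 0 := by
  by_cases hab : a.1 * b.2 - a.2 * b.1 ≠ 0
  · refine ⟨(c.1 * b.2 - c.2 * b.1) / (a.1 * b.2 - a.2 * b.1),
      (a.1 * c.2 - a.2 * c.1) / (a.1 * b.2 - a.2 * b.1), -1, ?_, ?_⟩
    · rintro ⟨-, -, h⟩; norm_num at h
    · apply Prod.ext <;>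
        simp only [Prod.fst_add, Prod.snd_add, Prod.smul_fst, Prod.smul_snd, smul_eq_mul,
          Prod.fst_zero, Prod.snd_zero] <;>
        rw [div_mul_eq_mul_div, div_mul_eq_mul_div, div_add_div _ _ hab hab,
          div_add' _ _ _ (mul_ne_zero hab hab), div_eq_zero_iff] <;> left <;> ring
  · push_neg at hab
    by_cases ha : a = 0
    · exact ⟨1, 0, 0, by rintro ⟨h, -, -⟩; norm_num at h, by simp [ha]⟩
    · have hpos : 0 < a.1 * a.1 + a.2 * a.2 := by
        have h' : a.1 ≠ 0 ∨ a.2 ≠ 0 := by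
          by_contra hc; push_neg at hc; exact ha (Prod.ext hc.1 hc.2)
        rcases h' with hx | hx
        · nlinarith [mul_self_nonneg a.2, (mul_self_pos).mpr hx]
        · nlinarith [mul_self_nonneg a.1, (mul_self_pos).mpr hx]
      refine ⟨(a.1 * b.1 + a.2 * b.2) / (a.1 * a.1 + a.2 * a.2), -1, 0, ?_, ?_⟩
      · rintro ⟨-, h, -⟩; norm_num at h
      · apply Prod.ext <;>
          simp only [Prod.fst_add, Prod.snd_add, Prod.smul_fst, Prod.smul_snd, smul_eq_mul,
            Prod.fst_zero, Prod.snd_zero] <;>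
          rw [div_mul_eq_mul_div, div_add' _ _ _ hpos.ne', div_add' _ _ _ hpos.ne',
            div_eq_zero_iff] <;> left
        · linear_combination a.2 * hab
        · linear_combination (-a.1) * hab

lemma clm_eq_dp (f : E →L[ℝ] ℝ) : ∃ v : E, ∀ w : E, f w = dp v w := by
  refine ⟨(f (1, 0), f (0, 1)), fun w => ?_⟩
  have hw : w = w.1 • ((1 : ℝ), (0 : ℝ)) + w.2 • ((0 : ℝ), (1 : ℝ)) := by
    apply Prod.ext <;> simp
  calc f w = f (w.1 • ((1 : ℝ), (0 : ℝ)) + w.2 • ((0 : ℝ), (1 : ℝ))) := by rw [← hw]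
    _ = w.1 * f (1, 0) + w.2 * f (0, 1) := by
        rw [map_add, map_smul, map_smul]; simp [smul_eq_mul]
    _ = dp (f (1, 0), f (0, 1)) w := by simp [dp]; ring

lemma sep_point {S : Set E} (hS : S.Finite) {x : E} (hx : x ∉ convexHull ℝ S) :
    ∃ v : E, ∃ t : ℝ, (∀ y ∈ S, dp v y < t) ∧ t < dp v x := by
  obtain ⟨f, u, hfx, hfs⟩ := geometric_hahn_banach_point_closed
    (convex_convexHull ℝ S) (hS.isClosed_convexHull (𝕜 := ℝ)) hx
  obtain ⟨v, hv⟩ := clm_eq_dp (-f)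
  refine ⟨v, -u, fun y hy => ?_, ?_⟩
  · have := hfs y (subset_convexHull ℝ S hy)
    have h2 := hv y
    simp only [ContinuousLinearMap.neg_apply] at h2
    linarith [h2]
  · have h2 := hv x
    simp only [ContinuousLinearMap.neg_apply] at h2
    linarith [h2]

lemma fan_aux {ι : Type} (S : Set E) :
    ∀ (n : ℕ) (t : Finset ι) (w : ι → ℝ) (z : ι → E) (x : E), t.card ≤ n →
      (∀ i ∈ t, 0 ≤ w i) → (∑ i ∈ t, w i) ≤ 1 → (∀ i ∈ t, z i ∈ S) →
      x = ∑ i ∈ t, w i • z i → x ≠ 0 →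
      ∃ b ∈ S, ∃ b' ∈ S, ∃ α β : ℝ, 0 ≤ α ∧ 0 ≤ β ∧ α + β ≤ 1 ∧ x = α • b + β • b' := by
  intro n
  induction n with
  | zero =>
    intro t w z x hc _ _ _ hx hx0
    have ht : t = ∅ := Finset.card_eq_zero.mp (Nat.le_zero.mp hc)
    subst ht
    simp only [Finset.sum_empty] at hx
    exact absurd hx hx0
  | succ n ih =>
    intro t w z x hc hw hsum hz hx hx0
    classical
    by_cases hle : t.card ≤ 2
    · -- base extraction
      rcases Nat.lt_or_ge t.card 1 with h0 | h1
      · have ht : t = ∅ := Finset.card_eq_zero.mp (by omega)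
        subst ht
        simp only [Finset.sum_empty] at hx
        exact absurd hx hx0
      rcases Nat.lt_or_ge t.card 2 with h2 | h2
      · have ht : t.card = 1 := by omega
        obtain ⟨i, hi⟩ := Finset.card_eq_one.mp ht
        subst hi
        simp only [Finset.sum_singleton] at hx hsum
        refine ⟨z i, hz i (Finset.mem_singleton_self i), z i, hz i (Finset.mem_singleton_self i),
          w i, 0, hw i (Finset.mem_singleton_self i), le_refl 0, by linarith, by simp [hx]⟩
      · have ht : t.card = 2 := by omega
        obtain ⟨i, j, hij, hijt⟩ := Finset.card_eq_two.mp ht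
        have hi : i ∈ t := by rw [hijt]; simp
        have hj : j ∈ t := by rw [hijt]; simp
        rw [hijt, Finset.sum_pair hij] at hx hsum
        exact ⟨z i, hz i hi, z j, hz j hj, w i, w j, hw i hi, hw j hj, hsum, hx⟩
    · -- reduction step
      push_neg at hle
      obtain ⟨i₁, i₂, i₃, h1t, h2t, h3t, h12, h13, h23⟩ := Finset.two_lt_card_iff.mp hle
      obtain ⟨p, q, r, hpqr, hrel⟩ := dep3 (z i₁) (z i₂) (z i₃)
      classical
      set f : ι → ℝ := fun i => if i = i₁ then p else if i = i₂ then q else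
        if i = i₃ then r else 0 with hf
      have hsub : ({i₁, i₂, i₃} : Finset ι) ⊆ t := by
        intro i hi
        simp only [Finset.mem_insert, Finset.mem_singleton] at hi
        rcases hi with rfl | rfl | rfl <;> assumption
      have hfsum : ∑ i ∈ t, f i • z i = 0 := by
        rw [← Finset.sum_subset hsub (fun i _ hni => ?_)]
        · rw [Finset.sum_insert (by simp [h12, h13]), Finset.sum_insert (by simp [h23]),
            Finset.sum_singleton]
          simp only [hf, if_pos rfl, if_neg h12.symm, if_neg h13.symm, if_neg h23.symm]
          rw [← add_assoc]
          exact hrel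
        · simp only [Finset.mem_insert, Finset.mem_singleton, not_or] at hni
          simp [hf, hni.1, hni.2.1, hni.2.2]
      have hfnt : ∃ i ∈ t, f i ≠ 0 := by
        by_contra hcon
        push_neg at hcon
        refine hpqr ⟨?_, ?_, ?_⟩
        · have := hcon i₁ h1t; simpa [hf] using this
        · have := hcon i₂ h2t; simpa [hf, h12.symm] using this
        · have := hcon i₃ h3t; simpa [hf, h13.symm, h23.symm] using this
      -- sign normalisation
      set g : ι → ℝ := if 0 ≤ ∑ i ∈ t, f i then f else (fun i => -(f i)) with hg
      have hgsumz : ∑ i ∈ t, g i • z i = 0 := by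
        by_cases hs : 0 ≤ ∑ i ∈ t, f i
        · simp only [hg, if_pos hs]; exact hfsum
        · simp only [hg, if_neg hs, neg_smul, Finset.sum_neg_distrib, hfsum, neg_zero]
      have hgsum : 0 ≤ ∑ i ∈ t, g i := by
        by_cases hs : 0 ≤ ∑ i ∈ t, f i
        · simp only [hg, if_pos hs]; exact hs
        · simp only [hg, if_neg hs, Finset.sum_neg_distrib]; linarith [lt_of_not_ge hs]
      have hgnt : ∃ i ∈ t, g i ≠ 0 := by
        obtain ⟨i, hit, hif⟩ := hfnt
        refine ⟨i, hit, ?_⟩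
        by_cases hs : 0 ≤ ∑ i ∈ t, f i <;> simp [hg, hs, hif]
      have hpos : ∃ i ∈ t, 0 < g i := by
        by_contra hcon
        push_neg at hcon
        have hzero : ∑ i ∈ t, g i = 0 := le_antisymm (Finset.sum_nonpos hcon) hgsum
        obtain ⟨i, hit, hgi⟩ := hgnt
        have := (Finset.sum_eq_zero_iff_of_nonpos hcon).mp hzero i hit
        exact hgi this
      obtain ⟨i₀, hi₀t, hi₀⟩ := hpos
      have hne : (t.filter (fun i => 0 < g i)).Nonempty :=
        ⟨i₀, Finset.mem_filter.mpr ⟨hi₀t, hi₀⟩⟩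
      obtain ⟨e, he, hemin⟩ := Finset.exists_min_image (t.filter (fun i => 0 < g i))
        (fun i => w i / g i) hne
      rw [Finset.mem_filter] at he
      obtain ⟨het, hge⟩ := he
      set τ : ℝ := w e / g e with hτ
      have hτ0 : 0 ≤ τ := div_nonneg (hw e het) hge.le
      set w' : ι → ℝ := fun i => w i - τ * g i with hw'
      have hw'nn : ∀ i ∈ t, 0 ≤ w' i := by
        intro i hit
        by_cases hgi : 0 < g i
        · have hmin := hemin i (Finset.mem_filter.mpr ⟨hit, hgi⟩)
          rw [div_le_div_iff₀ hge hgi] at hmin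
          simp only [hw']
          rw [sub_nonneg, hτ, div_mul_eq_mul_div, div_le_iff₀ hge]
          linarith
        · push_neg at hgi
          have : τ * g i ≤ 0 := mul_nonpos_of_nonneg_of_nonpos hτ0 hgi
          have := hw i hit
          simp only [hw']; linarith
      have hw'e : w' e = 0 := by
        simp only [hw', hτ]
        field_simp
        simp
      have hx' : x = ∑ i ∈ t, w' i • z i := by
        simp only [hw', sub_smul, mul_smul, Finset.sum_sub_distrib, ← Finset.smul_sum, hgsumz,
          smul_zero, sub_zero]
        exact hx
      have hsum' : ∑ i ∈ t, w' i ≤ 1 := by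
        have : ∑ i ∈ t, w' i = (∑ i ∈ t, w i) - τ * ∑ i ∈ t, g i := by
          simp [hw', Finset.sum_sub_distrib, Finset.mul_sum]
        rw [this]
        nlinarith [mul_nonneg hτ0 hgsum]
      -- drop e
      have hxe : x = ∑ i ∈ t.erase e, w' i • z i := by
        rw [hx', ← Finset.add_sum_erase t _ het, hw'e, zero_smul, zero_add]
      have hce : (t.erase e).card ≤ n := by
        have := Finset.card_erase_of_mem het
        omega
      refine ih (t.erase e) w' z x hce (fun i hi => hw'nn i (Finset.mem_of_mem_erase hi)) ?_
        (fun i hi => hz i (Finset.mem_of_mem_erase hi)) hxe hx0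
      calc ∑ i ∈ t.erase e, w' i = ∑ i ∈ t, w' i - w' e := by
            rw [← Finset.add_sum_erase t _ het]; ring
        _ ≤ 1 := by rw [hw'e]; linarith

lemma fan {S : Set E} {x : E} (hx0 : x ≠ 0) (hx : x ∈ convexHull ℝ (insert 0 S)) :
    ∃ b ∈ S, ∃ b' ∈ S, ∃ α β : ℝ, 0 ≤ α ∧ 0 ≤ β ∧ α + β ≤ 1 ∧ x = α • b + β • b' := by
  rw [mem_convexHull_iff_exists_fintype] at hx
  obtain ⟨ι, hfin, w, z, hw, hsum, hz, hxx⟩ := hx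
  classical
  set t : Finset ι := Finset.univ.filter (fun i => z i ≠ 0) with ht
  have hxt : x = ∑ i ∈ t, w i • z i := by
    rw [← hxx]
    exact (Finset.sum_filter_of_ne (fun i _ hne => by
      intro hzi
      exact hne (by rw [hzi, smul_zero]))).symm
  have hsumt : ∑ i ∈ t, w i ≤ 1 := by
    rw [← hsum]
    exact Finset.sum_le_sum_of_subset_of_nonneg (Finset.filter_subset _ _)
      (fun i _ _ => hw i)
  have hzt : ∀ i ∈ t, z i ∈ S := by
    intro i hi
    rw [ht, Finset.mem_filter] at hi
    rcases hz i with h0 | hS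
    · exact absurd h0 hi.2
    · exact hS
  exact fan_aux S t.card t w z x le_rfl (fun i _ => hw i) hsumt hzt hxt hx0

noncomputable def Pd (n : E) (c : ℝ) (x₀ : E) : E := (c - dp n x₀)⁻¹ • n

lemma dual_pos {n : E} {c : ℝ} {x₀ : E} (hc : 0 < c - dp n x₀) (z : E) :
    dp (Pd n c x₀) (z - x₀) ≤ 1 ↔ dp n z ≤ c := by
  rw [Pd, dp_smul_left, dp_sub_right, ← div_eq_inv_mul, div_le_one hc]
  constructor <;> intro <;> linarith

lemma dual_neg {n : E} {c : ℝ} {x₀ : E} (hc : c - dp n x₀ < 0) (z : E) :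
    1 ≤ dp (Pd n c x₀) (z - x₀) ↔ dp n z ≤ c := by
  rw [Pd, dp_smul_left, dp_sub_right, ← div_eq_inv_mul, one_le_div_of_neg hc]
  constructor <;> intro <;> linarith

lemma interior_of_min {H : Set (Set E)} (hfin : H.Finite)
    (nv : Set E → E) (off : Set E → ℝ)
    (hnv : ∀ h ∈ H, nv h ≠ 0)
    (hmem : ∀ h ∈ H, ∀ x : E, x ∈ h ↔ dp (nv h) x ≤ off h)
    (x₀ : E)
    (hmin : ∀ y : E, {h ∈ H | y ∈ h} ⊆ {h ∈ H | x₀ ∈ h} → ∀ h ∈ H, x₀ ∈ h → y ∈ h) :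
    ∀ h ∈ H, x₀ ∈ h → dp (nv h) x₀ < off h := by
  intro h hH hx
  set U : Set E := ⋂ g ∈ {g ∈ H | x₀ ∉ g}, {y : E | off g < dp (nv g) y} with hU
  have hUopen : IsOpen U :=
    Set.Finite.isOpen_biInter (hfin.subset (sep_subset _ _))
      (fun g _ => isOpen_lt continuous_const (continuous_dp (nv g)))
  have hx₀U : x₀ ∈ U := by
    rw [hU]
    refine mem_biInter ?_
    rintro g ⟨hgH, hgx⟩
    have : ¬ dp (nv g) x₀ ≤ off g := fun hle => hgx ((hmem g hgH x₀).mpr hle)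
    exact lt_of_not_ge this
  obtain ⟨ε, hε, hball⟩ := Metric.isOpen_iff.mp hUopen x₀ hx₀U
  have hnorm : 0 < ‖nv h‖ := norm_pos_iff.mpr (hnv h hH)
  set τ : ℝ := ε / (2 * ‖nv h‖) with hτdef
  have hτ : 0 < τ := by positivity
  set y : E := x₀ + τ • nv h with hy
  have hyball : y ∈ Metric.ball x₀ ε := by
    rw [Metric.mem_ball, dist_eq_norm]
    have h1 : y - x₀ = τ • nv h := by rw [hy]; abel
    rw [h1, norm_smul, Real.norm_eq_abs, abs_of_pos hτ, hτdef]
    rw [div_mul_eq_mul_div]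
    rw [div_lt_iff₀ (by positivity)]
    nlinarith
  have hyU : y ∈ U := hball hyball
  have hTy : {h' ∈ H | y ∈ h'} ⊆ {h' ∈ H | x₀ ∈ h'} := by
    rintro h' ⟨h'H, hyh'⟩
    refine ⟨h'H, ?_⟩
    by_contra hx'
    have hlt : off h' < dp (nv h') y := by
      rw [hU] at hyU
      exact mem_iInter₂.mp hyU h' ⟨h'H, hx'⟩
    exact (not_le.mpr hlt) ((hmem h' h'H y).mp hyh')
  have hyh : y ∈ h := hmin y hTy h hH hx
  have hle := (hmem h hH y).mp hyh
  rw [hy, dp_add_right, dp_smul_right] at hle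
  nlinarith [dp_self_pos (hnv h hH), mul_pos hτ (dp_self_pos (hnv h hH))]

lemma construct {H : Set (Set E)} (hfin : H.Finite)
    (nv : Set E → E) (off : Set E → ℝ)
    (hnv : ∀ h ∈ H, nv h ≠ 0)
    (hmem : ∀ h ∈ H, ∀ x : E, x ∈ h ↔ dp (nv h) x ≤ off h)
    (x₀ : E) (r₀ : Set E) (hr₀H : r₀ ∈ H)
    (hr₀int : 0 < off r₀ - dp (nv r₀) x₀)
    (hsingle : ∀ z : E, (∀ g ∈ H, x₀ ∉ g → z ∉ g) → z ∈ r₀) :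
    ∃ b ∈ H, ∃ b' ∈ H, x₀ ∉ b ∧ x₀ ∉ b' ∧
      (∃ α β : ℝ, 0 ≤ α ∧ 0 ≤ β ∧ α + β ≤ 1 ∧
        Pd (nv r₀) (off r₀) x₀ = α • Pd (nv b) (off b) x₀ + β • Pd (nv b') (off b') x₀) ∧
      (∀ p : E, p ∈ r₀ ∨ p ∈ b ∨ p ∈ b') := by
  classical
  set B : Set (Set E) := {g ∈ H | x₀ ∉ g} with hB
  have hBneg : ∀ g ∈ B, off g - dp (nv g) x₀ < 0 := by
    rintro g ⟨hgH, hgx⟩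
    have := (hmem g hgH x₀)
    have : ¬ dp (nv g) x₀ ≤ off g := fun hle => hgx ((hmem g hgH x₀).mpr hle)
    linarith [lt_of_not_ge this]
  set BP : Set E := (fun g => Pd (nv g) (off g) x₀) '' B with hBP
  have hBPfin : (insert (0 : E) BP).Finite :=
    ((hfin.subset (sep_subset _ _)).image _).insert 0
  -- key claim : Pd r₀ ∈ hull
  have hkey : Pd (nv r₀) (off r₀) x₀ ∈ convexHull ℝ (insert 0 BP) := by
    by_contra hnot
    obtain ⟨v, t, hvS, hvx⟩ := sep_point hBPfin hnot
    have ht : 0 < t := by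
      have := hvS 0 (mem_insert _ _)
      rwa [dp_zero_right] at this
    set z : E := x₀ + t⁻¹ • v with hz
    have hzx : z - x₀ = t⁻¹ • v := by rw [hz]; abel
    have hzr : z ∉ r₀ := by
      intro hzr
      have h1 : dp (Pd (nv r₀) (off r₀) x₀) (z - x₀) ≤ 1 :=
        (dual_pos hr₀int z).mpr ((hmem r₀ hr₀H z).mp hzr)
      rw [hzx, dp_comm, dp_smul_left, dp_comm] at h1
      have h2 : t⁻¹ * dp v (Pd (nv r₀) (off r₀) x₀) > t⁻¹ * t :=
        mul_lt_mul_of_pos_left hvx (inv_pos.mpr ht)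
      rw [inv_mul_cancel₀ ht.ne'] at h2
      rw [dp_comm] at h1
      linarith
    apply hzr
    apply hsingle
    intro g hgH hgx hzg
    have h1 : 1 ≤ dp (Pd (nv g) (off g) x₀) (z - x₀) :=
      (dual_neg (hBneg g ⟨hgH, hgx⟩) z).mpr ((hmem g hgH z).mp hzg)
    have hmemBP : Pd (nv g) (off g) x₀ ∈ insert (0:E) BP :=
      mem_insert_of_mem _ ⟨g, ⟨hgH, hgx⟩, rfl⟩
    have h2 := hvS _ hmemBP
    rw [hzx, dp_comm, dp_smul_left, dp_comm] at h1
    have h3 : t⁻¹ * dp v (Pd (nv g) (off g) x₀) < t⁻¹ * t :=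
      mul_lt_mul_of_pos_left h2 (inv_pos.mpr ht)
    rw [inv_mul_cancel₀ ht.ne'] at h3
    rw [dp_comm] at h1
    linarith
  have hPne : Pd (nv r₀) (off r₀) x₀ ≠ 0 :=
    smul_ne_zero (inv_ne_zero hr₀int.ne') (hnv r₀ hr₀H)
  obtain ⟨q, hq, q', hq', α, β, hα, hβ, hαβ, hrel⟩ := fan hPne hkey
  obtain ⟨b, hbB, rfl⟩ := hq
  obtain ⟨b', hb'B, rfl⟩ := hq'
  refine ⟨b, hbB.1, b', hb'B.1, hbB.2, hb'B.2, ⟨α, β, hα, hβ, hαβ, hrel⟩, ?_⟩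
  intro p
  by_contra hcon
  push_neg at hcon
  obtain ⟨hpr, hpb, hpb'⟩ := hcon
  have hρ : 1 < dp (Pd (nv r₀) (off r₀) x₀) (p - x₀) := by
    by_contra hle
    push_neg at hle
    exact hpr ((hmem r₀ hr₀H p).mpr ((dual_pos hr₀int p).mp hle))
  have hdb : dp (Pd (nv b) (off b) x₀) (p - x₀) < 1 := by
    by_contra hle
    push_neg at hle
    exact hpb ((hmem b hbB.1 p).mpr ((dual_neg (hBneg b hbB) p).mp hle))
  have hdb' : dp (Pd (nv b') (off b') x₀) (p - x₀) < 1 := by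
    by_contra hle
    push_neg at hle
    exact hpb' ((hmem b' hb'B.1 p).mpr ((dual_neg (hBneg b' hb'B) p).mp hle))
  have hval : dp (Pd (nv r₀) (off r₀) x₀) (p - x₀) =
      α * dp (Pd (nv b) (off b) x₀) (p - x₀) + β * dp (Pd (nv b') (off b') x₀) (p - x₀) := by
    rw [hrel, dp_add_left, dp_smul_left, dp_smul_left]
  nlinarith [mul_le_mul_of_nonneg_left hdb.le hα, mul_le_mul_of_nonneg_left hdb'.le hβ]

lemma hull3 {p₁ p₂ p₃ x : E} (h0 : x ∈ convexHull ℝ {p₁, p₂, p₃}) :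
    ∃ l₁ l₂ l₃ : ℝ, 0 ≤ l₁ ∧ 0 ≤ l₂ ∧ 0 ≤ l₃ ∧ l₁ + l₂ + l₃ = 1 ∧
      l₁ • p₁ + l₂ • p₂ + l₃ • p₃ = x := by
  have hpairne : ({p₂, p₃} : Set E).Nonempty := ⟨p₂, by simp⟩
  rw [convexHull_insert hpairne, convexHull_pair, mem_convexJoin] at h0
  obtain ⟨q, hq, w, hw, hseg⟩ := h0
  rw [Set.mem_singleton_iff] at hq
  subst hq
  obtain ⟨u, vv, hu, hvv, huv, hweq⟩ := hw
  obtain ⟨a, bb, ha, hbb, hab, habeq⟩ := hseg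
  exact ⟨a, bb*u, bb*vv, ha, by positivity, by positivity, by nlinarith, by
    rw [← habeq, ← hweq]; module⟩

end HalfPlaneCover

/-- A closed half-plane in `ℝ²`. -/
def IsHalfPlane (h : Set (ℝ × ℝ)) : Prop :=
  ∃ a b c : ℝ, (a, b) ≠ (0, 0) ∧ h = {p : ℝ × ℝ | a * p.1 + b * p.2 ≤ c}

open HalfPlaneCover

/-- Every 3-fold covering of the plane by a finite set of closed half-planes
decomposes into two coverings. -/
theorem threefold_cover_decomposes
    (H : Set (Set (ℝ × ℝ))) (hfin : H.Finite) (hH : ∀ h ∈ H, IsHalfPlane h)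
    (hcov : ∀ p : ℝ × ℝ, 3 ≤ {h ∈ H | p ∈ h}.ncard) :
    ∃ H₁ H₂ : Set (Set (ℝ × ℝ)),
      H₁ ∪ H₂ = H ∧ H₁ ∩ H₂ = ∅ ∧
      (∀ p : ℝ × ℝ, ∃ h ∈ H₁, p ∈ h) ∧ (∀ p : ℝ × ℝ, ∃ h ∈ H₂, p ∈ h) := by
  classical
  choose! av bv off hne heq using hH
  set nv : Set E → E := fun h => (av h, bv h) with hnvdef
  have hnv : ∀ h ∈ H, nv h ≠ 0 := by
    intro h hh
    simpa [hnvdef, Prod.ext_iff] using hne h hh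
  have hmem : ∀ h ∈ H, ∀ x : E, x ∈ h ↔ dp (nv h) x ≤ off h := by
    intro h hh x
    conv_lhs => rw [heq h hh]
    simp [dp, hnvdef]
  set T : E → Set (Set E) := fun x => {h ∈ H | x ∈ h} with hT
  have hT3 : ∀ x : E, 3 ≤ (T x).ncard := hcov
  have hTfin : ∀ x : E, (T x).Finite := fun x => hfin.subset (sep_subset _ _)
  -- minimal base point
  have hNe : {n : ℕ | ∃ x : E, (T x).ncard = n}.Nonempty := ⟨(T 0).ncard, 0, rfl⟩
  obtain ⟨x₀, hx₀⟩ := Nat.sInf_mem hNe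
  have hminx₀ : ∀ y : E, T y ⊆ T x₀ → T y = T x₀ := by
    intro y hsub
    refine Set.eq_of_subset_of_ncard_le hsub ?_ (hTfin x₀)
    rw [hx₀]
    exact Nat.sInf_le ⟨y, rfl⟩
  have hmin₀' : ∀ y : E, {h ∈ H | y ∈ h} ⊆ {h ∈ H | x₀ ∈ h} → ∀ h ∈ H, x₀ ∈ h → y ∈ h := by
    intro y hsub h hh hx
    have he : T y = T x₀ := hminx₀ y hsub
    have : h ∈ T y := by rw [he]; exact ⟨hh, hx⟩
    exact this.2
  have hint₀ := interior_of_min hfin nv off hnv hmem x₀ hmin₀'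
  obtain ⟨r₀, hr₀⟩ : (T x₀).Nonempty :=
    Set.nonempty_of_ncard_ne_zero (by have := hT3 x₀; omega)
  have hsingle₀ : ∀ z : E, (∀ g ∈ H, x₀ ∉ g → z ∉ g) → z ∈ r₀ := by
    intro z hz
    have hsub : T z ⊆ T x₀ := by
      rintro h ⟨hh, hzh⟩
      refine ⟨hh, ?_⟩
      by_contra hx
      exact hz h hh hx hzh
    have heqT := hminx₀ z hsub
    have : r₀ ∈ T z := by rw [heqT]; exact hr₀
    exact this.2
  obtain ⟨b, hbH, b', hb'H, hbx, hb'x, -, hcover₁⟩ :=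
    construct hfin nv off hnv hmem x₀ r₀ hr₀.1
      (by have := hint₀ r₀ hr₀.1 hr₀.2; linarith) hsingle₀
  set H₁ : Set (Set E) := {r₀, b, b'} with hH₁
  have hH₁sub : H₁ ⊆ H := by
    intro h hh
    rcases hh with rfl | hh
    · exact hr₀.1
    rcases hh with rfl | hh
    · exact hbH
    rcases hh with rfl
    exact hb'H
  have hH₁fin : H₁.Finite := Set.toFinite _
  have hH₁card : H₁.ncard ≤ 3 := by
    calc H₁.ncard ≤ ({b, b'} : Set (Set E)).ncard + 1 := Set.ncard_insert_le _ _
      _ ≤ (({b'} : Set (Set E)).ncard + 1) + 1 := by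
          have := Set.ncard_insert_le b ({b'} : Set (Set E))
          omega
      _ ≤ 3 := by rw [Set.ncard_singleton]
  have hcov₁ : ∀ p : E, ∃ h ∈ H₁, p ∈ h := by
    intro p
    rcases hcover₁ p with h | h | h
    · exact ⟨r₀, by simp [hH₁], h⟩
    · exact ⟨b, by simp [hH₁], h⟩
    · exact ⟨b', by simp [hH₁], h⟩
  by_cases hdone : ∀ p : E, ∃ h ∈ H \ H₁, p ∈ h
  · exact ⟨H₁, H \ H₁, Set.union_diff_cancel hH₁sub,
      by ext h; simp, hcov₁, hdone⟩
  push_neg at hdone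
  obtain ⟨x₁, hx₁⟩ := hdone
  have hTx₁sub : T x₁ ⊆ H₁ := by
    rintro h ⟨hh, hxh⟩
    by_contra hmem₁
    exact hx₁ h ⟨hh, hmem₁⟩ hxh
  have hTx₁eq : T x₁ = H₁ :=
    Set.eq_of_subset_of_ncard_le hTx₁sub (le_trans hH₁card (hT3 x₁)) hH₁fin
  have hcard3 : (T x₁).ncard = 3 :=
    le_antisymm (by rw [hTx₁eq]; exact hH₁card) (hT3 x₁)
  obtain ⟨A₁, A₂, A₃, h12, h13, h23, henum⟩ := Set.ncard_eq_three.mp hcard3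
  have hA₁T : A₁ ∈ T x₁ := by rw [henum]; exact mem_insert _ _
  have hA₂T : A₂ ∈ T x₁ := by rw [henum]; simp
  have hA₃T : A₃ ∈ T x₁ := by rw [henum]; simp
  have hminx₁ : ∀ y : E, T y ⊆ T x₁ → T y = T x₁ := by
    intro y hsub
    exact Set.eq_of_subset_of_ncard_le hsub (by rw [hcard3]; exact hT3 y) (hTfin x₁)
  have hmin₁' : ∀ y : E, {h ∈ H | y ∈ h} ⊆ {h ∈ H | x₁ ∈ h} → ∀ h ∈ H, x₁ ∈ h → y ∈ h := by
    intro y hsub h hh hx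
    have he : T y = T x₁ := hminx₁ y hsub
    have : h ∈ T y := by rw [he]; exact ⟨hh, hx⟩
    exact this.2
  have hint₁ := interior_of_min hfin nv off hnv hmem x₁ hmin₁'
  have hsingle₁ : ∀ z : E, (∀ g ∈ H, x₁ ∉ g → z ∉ g) → z ∈ A₁ := by
    intro z hz
    have hsub : T z ⊆ T x₁ := by
      rintro h ⟨hh, hzh⟩
      refine ⟨hh, ?_⟩
      by_contra hx
      exact hz h hh hx hzh
    have heqT := hminx₁ z hsub
    have : A₁ ∈ T z := by rw [heqT]; exact hA₁T
    exact this.2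
  obtain ⟨c, hcH, c', hc'H, hcx, hc'x, ⟨α, β, hα, hβ, hαβ, hrel⟩, hcover₂⟩ :=
    construct hfin nv off hnv hmem x₁ A₁ hA₁T.1
      (by have := hint₁ A₁ hA₁T.1 hA₁T.2; linarith) hsingle₁
  set H₂f : Set (Set E) := {A₁, c, c'} with hH₂f
  have hH₂sub : H₂f ⊆ H := by
    intro h hh
    rcases hh with rfl | hh
    · exact hA₁T.1
    rcases hh with rfl | hh
    · exact hcH
    rcases hh with rfl
    exact hc'H
  have hH₂fin : H₂f.Finite := Set.toFinite _
  have hH₂card : H₂f.ncard ≤ 3 := by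
    calc H₂f.ncard ≤ ({c, c'} : Set (Set E)).ncard + 1 := Set.ncard_insert_le _ _
      _ ≤ (({c'} : Set (Set E)).ncard + 1) + 1 := by
          have := Set.ncard_insert_le c ({c'} : Set (Set E))
          omega
      _ ≤ 3 := by rw [Set.ncard_singleton]
  have hcov₂ : ∀ p : E, ∃ h ∈ H₂f, p ∈ h := by
    intro p
    rcases hcover₂ p with h | h | h
    · exact ⟨A₁, by simp [hH₂f], h⟩
    · exact ⟨c, by simp [hH₂f], h⟩
    · exact ⟨c', by simp [hH₂f], h⟩
  have hcovC : ∀ p : E, ∃ h ∈ H \ H₂f, p ∈ h := by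
    by_contra hno
    push_neg at hno
    obtain ⟨x', hx'⟩ := hno
    have hTx'sub : T x' ⊆ H₂f := by
      rintro h ⟨hh, hxh⟩
      by_contra hmem₂
      exact hx' h ⟨hh, hmem₂⟩ hxh
    have hTx'eq : T x' = H₂f :=
      Set.eq_of_subset_of_ncard_le hTx'sub (le_trans hH₂card (hT3 x')) hH₂fin
    have hx'A₁ : x' ∈ A₁ := by
      have : A₁ ∈ T x' := by rw [hTx'eq]; exact mem_insert _ _
      exact this.2
    have hx'c : x' ∈ c := by
      have : c ∈ T x' := by rw [hTx'eq]; simp [hH₂f]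
      exact this.2
    have hx'c' : x' ∈ c' := by
      have : c' ∈ T x' := by rw [hTx'eq]; simp [hH₂f]
      exact this.2
    have hA₂ne_c : A₂ ≠ c := fun he => hcx (he ▸ hA₂T).2
    have hA₂ne_c' : A₂ ≠ c' := fun he => hc'x (he ▸ hA₂T).2
    have hA₃ne_c : A₃ ≠ c := fun he => hcx (he ▸ hA₃T).2
    have hA₃ne_c' : A₃ ≠ c' := fun he => hc'x (he ▸ hA₃T).2
    have hx'A₂ : x' ∉ A₂ := by
      refine hx' A₂ ⟨hA₂T.1, ?_⟩
      simp only [hH₂f, mem_insert_iff, mem_singleton_iff]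
      push_neg
      exact ⟨h12.symm, hA₂ne_c, hA₂ne_c'⟩
    have hx'A₃ : x' ∉ A₃ := by
      refine hx' A₃ ⟨hA₃T.1, ?_⟩
      simp only [hH₂f, mem_insert_iff, mem_singleton_iff]
      push_neg
      exact ⟨h13.symm, hA₃ne_c, hA₃ne_c'⟩
    set p₁ : E := Pd (nv A₁) (off A₁) x₁ with hp₁
    set p₂ : E := Pd (nv A₂) (off A₂) x₁ with hp₂
    set p₃ : E := Pd (nv A₃) (off A₃) x₁ with hp₃
    set y' : E := x' - x₁ with hy'
    have hm₂ : 1 < dp p₂ y' := by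
      by_contra hle
      push_neg at hle
      have hApos : 0 < off A₂ - dp (nv A₂) x₁ := by
        have := hint₁ A₂ hA₂T.1 hA₂T.2; linarith
      exact hx'A₂ ((hmem A₂ hA₂T.1 x').mpr ((dual_pos hApos x').mp hle))
    have hm₃ : 1 < dp p₃ y' := by
      by_contra hle
      push_neg at hle
      have hApos : 0 < off A₃ - dp (nv A₃) x₁ := by
        have := hint₁ A₃ hA₃T.1 hA₃T.2; linarith
      exact hx'A₃ ((hmem A₃ hA₃T.1 x').mpr ((dual_pos hApos x').mp hle))
    have hcneg : off c - dp (nv c) x₁ < 0 := by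
      have : ¬ dp (nv c) x₁ ≤ off c := fun hle => hcx ((hmem c hcH x₁).mpr hle)
      have := lt_of_not_ge this; linarith
    have hc'neg : off c' - dp (nv c') x₁ < 0 := by
      have : ¬ dp (nv c') x₁ ≤ off c' := fun hle => hc'x ((hmem c' hc'H x₁).mpr hle)
      have := lt_of_not_ge this; linarith
    have hdc : 1 ≤ dp (Pd (nv c) (off c) x₁) y' :=
      (dual_neg hcneg x').mpr ((hmem c hcH x').mp hx'c)
    have hdc' : 1 ≤ dp (Pd (nv c') (off c') x₁) y' :=
      (dual_neg hc'neg x').mpr ((hmem c' hc'H x').mp hx'c')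
    have hcovR : ∀ z : E, z ∈ A₁ ∨ z ∈ A₂ ∨ z ∈ A₃ := by
      intro z
      have hmemH₁ : ∀ hh : Set E, hh ∈ H₁ → hh = A₁ ∨ hh = A₂ ∨ hh = A₃ := by
        intro hh hhh
        have : hh ∈ T x₁ := by rw [hTx₁eq]; exact hhh
        rw [henum] at this
        simpa using this
      rcases hcover₁ z with h | h | h
      · rcases hmemH₁ r₀ (by simp [hH₁]) with h' | h' | h'
        · exact Or.inl (h' ▸ h)
        · exact Or.inr (Or.inl (h' ▸ h))
        · exact Or.inr (Or.inr (h' ▸ h))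
      · rcases hmemH₁ b (by simp [hH₁]) with h' | h' | h'
        · exact Or.inl (h' ▸ h)
        · exact Or.inr (Or.inl (h' ▸ h))
        · exact Or.inr (Or.inr (h' ▸ h))
      · rcases hmemH₁ b' (by simp [hH₁]) with h' | h' | h'
        · exact Or.inl (h' ▸ h)
        · exact Or.inr (Or.inl (h' ▸ h))
        · exact Or.inr (Or.inr (h' ▸ h))
    have h0hull : (0 : E) ∈ convexHull ℝ {p₁, p₂, p₃} := by
      by_contra hnot
      obtain ⟨v, t, hvS, hvx⟩ := sep_point (Set.toFinite _) hnot
      rw [dp_zero_right] at hvx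
      set z : E := x₁ + t⁻¹ • v with hzdef
      have hzx : z - x₁ = t⁻¹ • v := by rw [hzdef]; abel
      have hzi : ∀ A : Set E, A ∈ T x₁ → Pd (nv A) (off A) x₁ ∈ ({p₁, p₂, p₃} : Set E) →
          z ∉ A := by
        intro A hAT hpS hzA
        have hApos : 0 < off A - dp (nv A) x₁ := by
          have := hint₁ A hAT.1 hAT.2; linarith
        have h1 : dp (Pd (nv A) (off A) x₁) (z - x₁) ≤ 1 :=
          (dual_pos hApos z).mpr ((hmem A hAT.1 z).mp hzA)
        rw [hzx, dp_smul_right, dp_comm] at h1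
        have h2 := hvS _ hpS
        have hlt : t⁻¹ * t < t⁻¹ * dp v (Pd (nv A) (off A) x₁) :=
          mul_lt_mul_of_neg_left h2 (inv_lt_zero.mpr hvx)
        rw [inv_mul_cancel₀ (ne_of_lt hvx)] at hlt
        linarith
      rcases hcovR z with h | h | h
      · exact hzi A₁ hA₁T (by simp [hp₁]) h
      · exact hzi A₂ hA₂T (by simp [hp₂]) h
      · exact hzi A₃ hA₃T (by simp [hp₃]) h
    obtain ⟨l₁, l₂, l₃, hl₁, hl₂, hl₃, hlsum, hlrel⟩ := hull3 h0hull
    have hρval : dp p₁ y' = α * dp (Pd (nv c) (off c) x₁) y'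
        + β * dp (Pd (nv c') (off c') x₁) y' := by
      rw [hrel, dp_add_left, dp_smul_left, dp_smul_left]
    have hρnn : α + β ≤ dp p₁ y' := by
      rw [hρval]
      have h1 := mul_le_mul_of_nonneg_left hdc hα
      have h2 := mul_le_mul_of_nonneg_left hdc' hβ
      linarith
    have hρ0nn : 0 ≤ dp p₁ y' := le_trans (by linarith) hρnn
    have he1 : l₁ * dp p₁ y' + l₂ * dp p₂ y' + l₃ * dp p₃ y' = 0 := by
      have h0 : dp (l₁ • p₁ + l₂ • p₂ + l₃ • p₃) y' = 0 := by rw [hlrel, dp_zero_left]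
      rw [dp_add_left, dp_add_left, dp_smul_left, dp_smul_left, dp_smul_left] at h0
      linarith
    have hterm₂ : l₂ ≤ l₂ * dp p₂ y' := by
      have := mul_le_mul_of_nonneg_left hm₂.le hl₂
      linarith
    have hterm₃ : l₃ ≤ l₃ * dp p₃ y' := by
      have := mul_le_mul_of_nonneg_left hm₃.le hl₃
      linarith
    have haρ : 0 ≤ l₁ * dp p₁ y' := mul_nonneg hl₁ hρ0nn
    have hl₂0 : l₂ = 0 := by linarith
    have hl₃0 : l₃ = 0 := by linarith
    have hl₁1 : l₁ = 1 := by linarith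
    have hρ0 : dp p₁ y' = 0 := by
      rw [hl₁1, hl₂0, hl₃0] at he1
      linarith
    have hαβ0 : α + β = 0 := le_antisymm (by linarith) (by linarith)
    have hα0 : α = 0 := by linarith
    have hβ0 : β = 0 := by linarith
    have hp₁0 : p₁ = 0 := by
      rw [hrel, hα0, hβ0, zero_smul, zero_smul, add_zero]
    have hA₁pos : 0 < off A₁ - dp (nv A₁) x₁ := by
      have := hint₁ A₁ hA₁T.1 hA₁T.2; linarith
    have hp₁ne : p₁ ≠ 0 := by
      rw [hp₁, Pd]
      exact smul_ne_zero (inv_ne_zero hA₁pos.ne') (hnv A₁ hA₁T.1)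
    exact hp₁ne hp₁0
  exact ⟨H₂f, H \ H₂f, Set.union_diff_cancel hH₂sub, by ext h; simp, hcov₂, hcovC⟩
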